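/- arXiv:2012.12574 — 2 statements merged into one kernel-verified Lean document; each statement's English description precedes it below -/
import Mathlib

section
/- The point x₀ is a critical point of the Robin function, i.e. ∇γ̃(x₀) = 0, if and only if T''(x₀) = 0. -/
open Complex

/-- For a `C¹` real-valued function `f` on `ℂ ≃ ℝ²`, the gradient `∇f = ∂₁f + i∂₂f ∈ ℂ`. -/
noncomputable def grad (f : ℂ → ℝ) (x : ℂ) : ℂ :=
  (fderiv ℝ f x 1 : ℂ) + Complex.I * (fderiv ℝ f x Complex.I)

/-- The Robin function `γ̃(x) = -(1/(2π))·log(1 - |T(x)|²) + (1/(2π))·log|T'(x)|`. -/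
noncomputable def robin (T : ℂ → ℂ) (x : ℂ) : ℝ :=
  -(2 * Real.pi)⁻¹ * Real.log (1 - ‖T x‖ ^ 2)
    + (2 * Real.pi)⁻¹ * Real.log ‖deriv T x‖

open Filter Topology in

/-- An injective holomorphic function on an open set has nonvanishing derivative. -/
lemma deriv_ne_zero_of_injOn {Ω : Set ℂ} (hΩo : IsOpen Ω) {T : ℂ → ℂ}
    (hTd : DifferentiableOn ℂ T Ω) (hinj : Set.InjOn T Ω) {x₀ : ℂ} (hx₀ : x₀ ∈ Ω) :
    deriv T x₀ ≠ 0 := by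
  intro hder
  have hΩn : Ω ∈ 𝓝 x₀ := hΩo.mem_nhds hx₀
  have hTa : AnalyticAt ℂ T x₀ := hTd.analyticAt hΩn
  set f : ℂ → ℂ := fun z => T z - T x₀ with hf
  have hfa : AnalyticAt ℂ f x₀ := hTa.sub analyticAt_const
  have hderf : deriv f x₀ = 0 := by
    rw [hf]; simpa [deriv_sub_const] using hder
  by_cases hev : ∀ᶠ z in 𝓝 x₀, f z = 0
  · -- T locally constant: contradicts injectivity
    have h2 : ∀ᶠ z in 𝓝[≠] x₀, f z = 0 ∧ z ∈ Ω :=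
      ((hev.and (hΩo.eventually_mem hx₀)).filter_mono
        nhdsWithin_le_nhds)
    obtain ⟨z, ⟨hz0, hzΩ⟩, hzne⟩ := (h2.and (eventually_mem_nhdsWithin)).exists
    exact hzne (hinj hzΩ hx₀ (by simpa [hf, sub_eq_zero] using hz0))
  · obtain ⟨n, g, hga, hgne, hfe⟩ := hfa.exists_eventuallyEq_pow_smul_nonzero_iff.mpr hev
    have hfx₀ : f x₀ = 0 := by simp [hf]
    have hn0 : n ≠ 0 := by
      intro h0
      have h := hfe.self_of_nhds
      rw [h0, hfx₀] at h
      simp at h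
      exact hgne h.symm
    have hn1 : n ≠ 1 := by
      intro h1
      rw [h1] at hfe
      have hrhs : HasDerivAt (fun z => (z - x₀) ^ 1 • g z) (g x₀) x₀ := by
        have := (((hasDerivAt_id x₀).sub_const x₀).mul hga.differentiableAt.hasDerivAt)
        simpa [Pi.mul_def] using this
      have h := Filter.EventuallyEq.deriv_eq hfe
      rw [hderf, hrhs.deriv] at h
      exact hgne h.symm
    have hn2 : 2 ≤ n := by omega
    -- construct an n-th root ψ of g near x₀
    set c : ℂ := Complex.exp (Complex.log (g x₀) / n) with hc
    set ψ : ℂ → ℂ := fun z => c * Complex.exp ((n : ℂ)⁻¹ * Complex.log ((g x₀)⁻¹ * g z)) with hψ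
    have hone : (g x₀)⁻¹ * g x₀ = 1 := inv_mul_cancel₀ hgne
    have hψa : AnalyticAt ℂ ψ x₀ := by
      apply analyticAt_const.mul
      exact analyticAt_cexp.comp
        (analyticAt_const.mul ((analyticAt_const.mul hga).clog (by
          show (g x₀)⁻¹ * g x₀ ∈ _; rw [hone]; exact Complex.one_mem_slitPlane)))
    have hncC : (n : ℂ) ≠ 0 := Nat.cast_ne_zero.mpr hn0
    have hcn : c ^ n = g x₀ := by
      rw [hc, ← Complex.exp_nat_mul, mul_div_cancel₀ _ hncC, Complex.exp_log hgne]
    have hψx₀ : ψ x₀ = c := by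
      simp [hψ, hone]
    have hcne : c ≠ 0 := Complex.exp_ne_zero _
    have hψn : ∀ᶠ z in 𝓝 x₀, ψ z ^ n = g z := by
      filter_upwards [hga.continuousAt.eventually_ne hgne] with z hgz
      have hw : (g x₀)⁻¹ * g z ≠ 0 := mul_ne_zero (inv_ne_zero hgne) hgz
      rw [hψ]
      simp only
      rw [mul_pow, hcn, ← Complex.exp_nat_mul, ← mul_assoc, mul_inv_cancel₀ hncC, one_mul,
        Complex.exp_log hw, ← mul_assoc, mul_inv_cancel₀ hgne, one_mul]
    set φ : ℂ → ℂ := fun z => (z - x₀) * ψ z with hφ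
    have hφa : AnalyticAt ℂ φ x₀ := ((analyticAt_id).sub analyticAt_const).mul hψa
    have hφd : HasDerivAt φ c x₀ := by
      have := (((hasDerivAt_id x₀).sub_const x₀).mul hψa.differentiableAt.hasDerivAt)
      simpa [hψx₀, Pi.mul_def] using this
    obtain ⟨p, hp⟩ := hφa
    have hφs : HasStrictDerivAt φ c x₀ := by
      have h1 := hp.hasStrictDerivAt
      rwa [h1.hasDerivAt.unique hφd] at h1
    have hmap : Filter.map φ (𝓝 x₀) = 𝓝 0 := by
      have := hφs.map_nhds_eq hcne
      rwa [show φ x₀ = 0 by simp [hφ]] at this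
    -- the good set
    have hs : ∀ᶠ z in 𝓝 x₀, (f z = ((z - x₀) * ψ z) ^ n ∧ z ∈ Ω) := by
      filter_upwards [hfe, hψn, (hΩo.eventually_mem hx₀)]
        with z h1 h2 h3
      exact ⟨by rw [h1, smul_eq_mul, mul_pow, h2], h3⟩
    have hV : φ '' {z | f z = ((z - x₀) * ψ z) ^ n ∧ z ∈ Ω} ∈ 𝓝 (0 : ℂ) := by
      rw [← hmap]
      exact image_mem_map hs
    obtain ⟨ε, hε, hball⟩ := Metric.mem_nhds_iff.mp hV
    -- the rotation ζ
    set ζ : ℂ := Complex.exp ((2 * Real.pi / n : ℝ) * I) with hζ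
    have hζn : ζ ^ n = 1 := by
      rw [hζ, ← Complex.exp_nat_mul]
      have hcast : (n : ℂ) * ((2 * Real.pi / n : ℝ) * I) = 2 * (Real.pi : ℂ) * I := by
        push_cast
        have : (n : ℂ) ≠ 0 := hncC
        field_simp
      rw [hcast, Complex.exp_two_pi_mul_I]
    have hζabs : ‖ζ‖ = 1 := Complex.norm_exp_ofReal_mul_I _
    have hζ1 : ζ ≠ 1 := by
      rw [hζ]
      intro h
      obtain ⟨k, hk⟩ := Complex.exp_eq_one_iff.mp h
      have h2πI : (2 * (Real.pi : ℂ) * I) ≠ 0 := by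
        simp [Real.pi_ne_zero, Complex.I_ne_zero]
      have hk' : ((2 * Real.pi / n : ℝ) : ℂ) * I * n = (k : ℂ) * (2 * Real.pi * I) * n := by
        rw [hk]
      have hL : ((2 * Real.pi / n : ℝ) : ℂ) * I * n = 2 * (Real.pi : ℂ) * I := by
        push_cast
        field_simp
      rw [hL] at hk'
      have h1 : (1 : ℂ) * (2 * (Real.pi : ℂ) * I) = ((k * n : ℤ) : ℂ) * (2 * (Real.pi : ℂ) * I) := by
        push_cast
        linear_combination hk'
      have h2 : ((k * n : ℤ) : ℂ) = 1 := (mul_right_cancel₀ h2πI h1.symm)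
      have h3 : (k * n : ℤ) = 1 := by exact_mod_cast h2
      have h4 : (n : ℤ) ≤ 1 := Int.le_of_dvd one_pos ⟨k, by linarith [h3]⟩
      omega
    -- pick w and ζ w in the image of φ
    set w : ℂ := ((ε / 2 : ℝ) : ℂ) with hw
    have hwne : w ≠ 0 := by
      simp only [hw, ne_eq, Complex.ofReal_eq_zero]
      positivity
    have hwmem : w ∈ Metric.ball (0 : ℂ) ε := by
      simp only [hw, Metric.mem_ball, dist_zero_right, Complex.norm_real, Real.norm_eq_abs]
      rw [abs_of_pos (by positivity)]
      linarith
    have hζwmem : ζ * w ∈ Metric.ball (0 : ℂ) ε := by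
      simp only [Metric.mem_ball, dist_zero_right, norm_mul]
      rw [show ‖ζ‖ = 1 from hζabs, one_mul]
      simpa [hw, Metric.mem_ball, dist_zero_right] using hwmem
    obtain ⟨a, ⟨hfa_eq, haΩ⟩, hφa_eq⟩ := hball hwmem
    obtain ⟨b, ⟨hfb_eq, hbΩ⟩, hφb_eq⟩ := hball hζwmem
    have hTab : T a = T b := by
      have : f a = f b := by
        rw [hfa_eq, hfb_eq, show ((a - x₀) * ψ a) = φ a from rfl,
          show ((b - x₀) * ψ b) = φ b from rfl, hφa_eq, hφb_eq, mul_pow, hζn, one_mul]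
      simpa [hf, sub_left_inj] using this
    have hab : a = b := hinj haΩ hbΩ hTab
    have hww : w = ζ * w := by
      have h := congrArg φ hab
      rw [hφa_eq, hφb_eq] at h
      exact h
    exact hζ1 (mul_right_cancel₀ hwne (by rw [one_mul, ← hww]))

open Filter Topology in
/-- `x₀` is a critical point of the Robin function iff `T''(x₀) = 0`. -/
theorem stmt1
    (Ω : Set ℂ) (hΩo : IsOpen Ω) (hΩb : Bornology.IsBounded Ω)
    (hΩc : IsConnected Ω) (hΩsc : SimplyConnectedSpace Ω)
    (x₀ : ℂ) (hx₀ : x₀ ∈ Ω)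
    (T : ℂ → ℂ) (hTd : DifferentiableOn ℂ T Ω)
    (hTbij : Set.BijOn T Ω (Metric.ball 0 1))
    (hT0 : T x₀ = 0) :
    grad (robin T) x₀ = 0 ↔ iteratedDeriv 2 T x₀ = 0 := by
  have hΩn : Ω ∈ 𝓝 x₀ := hΩo.mem_nhds hx₀
  have hTa : AnalyticAt ℂ T x₀ := hTd.analyticAt hΩn
  set g : ℂ → ℂ := deriv T with hgdef
  have hgan : AnalyticAt ℂ g x₀ := ((hTd.analyticOnNhd hΩo).deriv) x₀ hx₀
  have hg0 : g x₀ ≠ 0 := deriv_ne_zero_of_injOn hΩo hTd hTbij.injOn hx₀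
  set c : ℝ := (2 * Real.pi)⁻¹ with hcdef
  have hc0 : c ≠ 0 := by
    rw [hcdef]
    positivity
  set m : ℂ := (g x₀)⁻¹ * deriv g x₀ with hm
  set F : ℂ → ℂ := fun x => Complex.log ((g x₀)⁻¹ * g x) with hF
  -- derivative of F
  have hFd : HasDerivAt F m x₀ := by
    have hinner : HasDerivAt (fun x => (g x₀)⁻¹ * g x) ((g x₀)⁻¹ * deriv g x₀) x₀ :=
      (hgan.differentiableAt.hasDerivAt).const_mul _
    have hlog : HasDerivAt Complex.log ((g x₀)⁻¹ * g x₀)⁻¹ ((g x₀)⁻¹ * g x₀) :=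
      Complex.hasDerivAt_log (by rw [inv_mul_cancel₀ hg0]; exact Complex.one_mem_slitPlane)
    have h := hlog.comp x₀ hinner
    simpa [Function.comp_def, inv_mul_cancel₀ hg0, hm, hF] using h
  have hFre : HasFDerivAt (fun x => (F x).re)
      (Complex.reCLM.comp ((ContinuousLinearMap.smulRight (1 : ℂ →L[ℂ] ℂ) m).restrictScalars ℝ))
      x₀ := by
    have h1 : HasFDerivAt F
        ((ContinuousLinearMap.smulRight (1 : ℂ →L[ℂ] ℂ) m).restrictScalars ℝ) x₀ :=
      (hasDerivAt_iff_hasFDerivAt.mp hFd).restrictScalars ℝ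
    exact (Complex.reCLM.hasFDerivAt).comp x₀ h1
  -- derivative of first piece is zero
  have hTdR : HasFDerivAt T (fderiv ℝ T x₀) x₀ :=
    (hTa.differentiableAt.restrictScalars ℝ).hasFDerivAt
  have hure : HasFDerivAt (fun x => (T x).re) (Complex.reCLM.comp (fderiv ℝ T x₀)) x₀ :=
    (Complex.reCLM.hasFDerivAt).comp x₀ hTdR
  have huim : HasFDerivAt (fun x => (T x).im) (Complex.imCLM.comp (fderiv ℝ T x₀)) x₀ :=
    (Complex.imCLM.hasFDerivAt).comp x₀ hTdR
  have hsq : HasFDerivAt (fun x => (T x).re ^ 2 + (T x).im ^ 2) (0 : ℂ →L[ℝ] ℝ) x₀ := by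
    have h1 : HasFDerivAt (fun x => (T x).re ^ 2) (0 : ℂ →L[ℝ] ℝ) x₀ := by
      have h := hure.mul hure
      simp only [hT0, Complex.zero_re, zero_smul, add_zero] at h
      simpa [pow_two, Pi.mul_def] using h
    have h2 : HasFDerivAt (fun x => (T x).im ^ 2) (0 : ℂ →L[ℝ] ℝ) x₀ := by
      have h := huim.mul huim
      simp only [hT0, Complex.zero_im, zero_smul, add_zero] at h
      simpa [pow_two, Pi.mul_def] using h
    simpa [Pi.add_def] using h1.add h2
  have hA : HasFDerivAt (fun x => Real.log (1 - ((T x).re ^ 2 + (T x).im ^ 2)))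
      (0 : ℂ →L[ℝ] ℝ) x₀ := by
    have hs : HasFDerivAt (fun x => 1 - ((T x).re ^ 2 + (T x).im ^ 2)) (0 : ℂ →L[ℝ] ℝ) x₀ := by
      simpa using hsq.const_sub 1
    have hlog : HasDerivAt Real.log 1 (1 - ((T x₀).re ^ 2 + (T x₀).im ^ 2)) := by
      rw [show (1 - ((T x₀).re ^ 2 + (T x₀).im ^ 2)) = 1 by simp [hT0]]
      simpa using Real.hasDerivAt_log one_ne_zero
    have h := hlog.comp_hasFDerivAt x₀ hs
    simpa [Function.comp_def] using h
  -- total derivative of the model function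
  have hψtot : HasFDerivAt (fun x => -c * Real.log (1 - ((T x).re ^ 2 + (T x).im ^ 2))
        + (c * (F x).re + c * Real.log ‖g x₀‖))
      ((-c) • (0 : ℂ →L[ℝ] ℝ) + c • (Complex.reCLM.comp
        ((ContinuousLinearMap.smulRight (1 : ℂ →L[ℂ] ℂ) m).restrictScalars ℝ))) x₀ :=
    (hA.const_mul (-c)).add ((hFre.const_mul c).add_const _)
  -- robin agrees with the model function near x₀
  have hev : robin T =ᶠ[𝓝 x₀] fun x => -c * Real.log (1 - ((T x).re ^ 2 + (T x).im ^ 2))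
      + (c * (F x).re + c * Real.log ‖g x₀‖) := by
    filter_upwards [hgan.continuousAt.eventually_ne hg0] with z hgz
    have h1 : ‖T z‖ ^ 2 = (T z).re ^ 2 + (T z).im ^ 2 := by
      rw [Complex.sq_norm, Complex.normSq_apply]
      ring
    have h2 : (F z).re = Real.log ‖g z‖ - Real.log ‖g x₀‖ := by
      rw [hF]
      simp only [Complex.log_re, norm_mul, norm_inv]
      rw [Real.log_mul (inv_ne_zero (norm_ne_zero_iff.mpr hg0)) (norm_ne_zero_iff.mpr hgz),
        Real.log_inv]
      ring
    simp only [robin, h1, h2, ← hgdef, ← hcdef]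
    ring
  -- compute the gradient
  have hgrad : grad (robin T) x₀ = (c : ℂ) * (starRingEnd ℂ) m := by
    rw [grad, hev.fderiv_eq, hψtot.fderiv]
    apply Complex.ext <;>
      simp [ContinuousLinearMap.add_apply, ContinuousLinearMap.smul_apply,
        ContinuousLinearMap.comp_apply, ContinuousLinearMap.coe_restrictScalars',
        ContinuousLinearMap.smulRight_apply, smul_eq_mul, Complex.conj_re, Complex.conj_im] <;>
      ring
  have h2T : iteratedDeriv 2 T x₀ = deriv g x₀ := by
    rw [show (2 : ℕ) = 1 + 1 from rfl, iteratedDeriv_succ, iteratedDeriv_one, hgdef]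
  rw [hgrad, h2T]
  constructor
  · intro h
    rcases mul_eq_zero.mp h with h | h
    · exact absurd h (by exact_mod_cast hc0)
    · have hm0 : m = 0 := by simpa using congrArg (starRingEnd ℂ) h
      rcases mul_eq_zero.mp (hm ▸ hm0) with h' | h'
      · exact absurd h' (inv_ne_zero hg0)
      · exact h'
  · intro h
    rw [hm, h, mul_zero, map_zero, mul_zero]
end

section
/- Define N(x,y,z) = [T'(x)·(T(z) − T(y)) − T'(z)·(T(x) − T(y))]·(x − y)·(z − y) + (x − z)·(T(x) − T(y))·(T(z) − T(y)). Then there exist r > 0 and a function N₁ : D(x₀,r)³ → ℂ, holomorphic in each of its three variables, such that N(x,y,z) = (x − y)²·(z − y)²·(x − z)·N₁(x,y,z) for all x, y, z in the disk D(x₀,r) = {|w − x₀| < r}. Moreover, if T''(x₀) = 0, then N₁(x₀,x₀,x₀) = T'(x₀)·T'''(x₀)/3. -/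
open Complex

private lemma ds_eq (f : ℂ → ℂ) {a b : ℂ} (h : b ≠ a) :
    dslope f a b = (f b - f a) / (b - a) := by
  rw [dslope_of_ne f h, slope_def_field]


private lemma ds_eq' (f : ℂ → ℂ) {a b : ℂ} (h : b ≠ a) :
    dslope f a b = (f a - f b) / (a - b) := by
  rw [ds_eq f h, ← neg_div_neg_eq]
  ring_nf

private lemma ds_comm (f : ℂ → ℂ) (a b : ℂ) : dslope f a b = dslope f b a := by
  rcases eq_or_ne a b with rfl | h
  · rfl
  · rw [dslope_of_ne f h.symm, dslope_of_ne f h, slope_comm]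

private lemma deriv_dslope {f : ℂ → ℂ} {a b : ℂ} (h : a ≠ b)
    (hf : DifferentiableAt ℂ f a) :
    deriv (dslope f b) a = (deriv f a * (a - b) - (f a - f b)) / (a - b) ^ 2 := by
  have hev : dslope f b =ᶠ[nhds a] fun z => (f z - f b) / (z - b) := by
    filter_upwards [eventually_ne_nhds h] with z hz
    exact ds_eq f hz
  rw [hev.deriv_eq]
  have h1 : HasDerivAt (fun z => (f z - f b) / (z - b))
      ((deriv f a * (a - b) - (f a - f b) * 1) / (a - b) ^ 2) a :=
    (hf.hasDerivAt.sub_const (f b)).div ((hasDerivAt_id a).sub_const b) (sub_ne_zero.2 h)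
  rw [h1.deriv]
  ring

private lemma ds_ds_comm {f : ℂ → ℂ} {a b : ℂ} (c : ℂ)
    (hfa : DifferentiableAt ℂ f a) (hfb : DifferentiableAt ℂ f b) :
    dslope (dslope f a) b c = dslope (dslope f b) a c := by
  rcases eq_or_ne a b with rfl | hab
  · rfl
  have hab' : (a : ℂ) - b ≠ 0 := sub_ne_zero.2 hab
  have hba' : (b : ℂ) - a ≠ 0 := sub_ne_zero.2 hab.symm
  rcases eq_or_ne c a with rfl | hca
  · rw [ds_eq (dslope f c) hab, dslope_same, ds_eq f hab.symm, dslope_same,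
      deriv_dslope hab hfa]
    field_simp
    ring
  rcases eq_or_ne c b with rfl | hcb
  · rw [dslope_same, deriv_dslope hab.symm hfb, ds_eq (dslope f c) hab.symm,
      dslope_same, ds_eq f hab]
    field_simp
    ring
  · rw [ds_eq (dslope f a) hcb, ds_eq (dslope f b) hca, ds_eq f hca, ds_eq f hcb,
      ds_eq f hab.symm, ds_eq f hab]
    have h1 : (c : ℂ) - a ≠ 0 := sub_ne_zero.2 hca
    have h2 : (c : ℂ) - b ≠ 0 := sub_ne_zero.2 hcb
    field_simp
    ring

private lemma analyticOnNhd_dslope {f : ℂ → ℂ} {U : Set ℂ}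
    (hf : AnalyticOnNhd ℂ f U) {c : ℂ} (hc : c ∈ U) :
    AnalyticOnNhd ℂ (dslope f c) U := by
  intro x hx
  rcases eq_or_ne x c with rfl | hxc
  · obtain ⟨p, hp⟩ := hf x hx
    exact ⟨p.fslope, hp.has_fpower_series_dslope_fslope⟩
  · have h1 : AnalyticAt ℂ (fun z => (f z - f c) / (z - c)) x :=
      ((hf x hx).sub analyticAt_const).div
        (analyticAt_id.sub analyticAt_const) (sub_ne_zero.2 hxc)
    apply h1.congr
    filter_upwards [eventually_ne_nhds hxc] with z hz
    exact (ds_eq f hz).symm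

private lemma iter_deriv_23 {f g : ℂ → ℂ} {U : Set ℂ} (hU : IsOpen U) {c a1 a2 : ℂ}
    (hc : c ∈ U) (hg : AnalyticOnNhd ℂ g U)
    (hf : ∀ z, f z = f c + (z - c) * (a1 + (z - c) * (a2 + (z - c) * g z))) :
    iteratedDeriv 2 f c = 2 * a2 ∧ iteratedDeriv 3 f c = 6 * g c := by
  have hg' : AnalyticOnNhd ℂ (deriv g) U := hg.deriv
  have hg'' : AnalyticOnNhd ℂ (deriv (deriv g)) U := hg'.deriv
  have hQ : ∀ z ∈ U, HasDerivAt f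
      (a1 + 2 * a2 * (z - c) + 3 * (z - c) ^ 2 * g z + (z - c) ^ 3 * deriv g z) z := by
    intro z hz
    have hgz : HasDerivAt g (deriv g z) z := (hg z hz).differentiableAt.hasDerivAt
    have hw : HasDerivAt (fun w : ℂ => w - c) 1 z := (hasDerivAt_id z).sub_const c
    have d3 : HasDerivAt (fun w => a2 + (w - c) * g w)
        (1 * g z + (z - c) * deriv g z) z := (hw.mul hgz).const_add a2
    have d2 : HasDerivAt (fun w => a1 + (w - c) * (a2 + (w - c) * g w))
        (1 * (a2 + (z - c) * g z) + (z - c) * (1 * g z + (z - c) * deriv g z)) z :=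
      (hw.mul d3).const_add a1
    have d1 : HasDerivAt (fun w => f c + (w - c) * (a1 + (w - c) * (a2 + (w - c) * g w)))
        (1 * (a1 + (z - c) * (a2 + (z - c) * g z)) +
          (z - c) * (1 * (a2 + (z - c) * g z) + (z - c) * (1 * g z + (z - c) * deriv g z))) z :=
      (hw.mul d2).const_add (f c)
    have hval : (1 * (a1 + (z - c) * (a2 + (z - c) * g z)) +
          (z - c) * (1 * (a2 + (z - c) * g z) + (z - c) * (1 * g z + (z - c) * deriv g z)))
        = a1 + 2 * a2 * (z - c) + 3 * (z - c) ^ 2 * g z + (z - c) ^ 3 * deriv g z := by ring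
    have hfun : f = fun w => f c + (w - c) * (a1 + (w - c) * (a2 + (w - c) * g w)) := funext hf
    rw [hfun]
    exact hval ▸ d1
  have hTQ : Set.EqOn (deriv f)
      (fun z => a1 + 2 * a2 * (z - c) + 3 * (z - c) ^ 2 * g z + (z - c) ^ 3 * deriv g z) U :=
    fun z hz => (hQ z hz).deriv
  have hR : ∀ z ∈ U, HasDerivAt
      (fun z => a1 + 2 * a2 * (z - c) + 3 * (z - c) ^ 2 * g z + (z - c) ^ 3 * deriv g z)
      (2 * a2 * 1 + ((3 : ℂ) * ((2 : ℕ) * (z - c) ^ (2 - 1) * 1) * g z + 3 * (z - c) ^ 2 * deriv g z)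
        + (((3 : ℕ) * (z - c) ^ (3 - 1) * 1) * deriv g z + (z - c) ^ 3 * deriv (deriv g) z)) z := by
    intro z hz
    have hgz : HasDerivAt g (deriv g z) z := (hg z hz).differentiableAt.hasDerivAt
    have hgz' : HasDerivAt (deriv g) (deriv (deriv g) z) z :=
      (hg' z hz).differentiableAt.hasDerivAt
    have hw : HasDerivAt (fun w : ℂ => w - c) 1 z := (hasDerivAt_id z).sub_const c
    exact ((((hw.const_mul (2 * a2)).const_add a1).add
      (((hw.pow 2).const_mul (3 : ℂ)).mul hgz)).add ((hw.pow 3).mul hgz'))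
  have hdd2 : ∀ z ∈ U, deriv (deriv f) z
      = 2 * a2 + 6 * (z - c) * g z + 6 * (z - c) ^ 2 * deriv g z
        + (z - c) ^ 3 * deriv (deriv g) z := by
    intro z hz
    rw [(Filter.eventuallyEq_of_mem (hU.mem_nhds hz) hTQ).deriv_eq, (hR z hz).deriv]
    push_cast
    ring
  have e2 : iteratedDeriv 2 f = deriv (deriv f) := by
    rw [show (2 : ℕ) = 1 + 1 by rfl, iteratedDeriv_succ, iteratedDeriv_one]
  have e3 : iteratedDeriv 3 f = deriv (deriv (deriv f)) := by
    rw [show (3 : ℕ) = 2 + 1 by rfl, iteratedDeriv_succ, e2]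
  constructor
  · rw [e2, hdd2 c hc]
    ring
  · rw [e3]
    have heq : Set.EqOn (deriv (deriv f))
        (fun z => 2 * a2 + 6 * (z - c) * g z + 6 * (z - c) ^ 2 * deriv g z
          + (z - c) ^ 3 * deriv (deriv g) z) U := fun z hz => hdd2 z hz
    rw [(Filter.eventuallyEq_of_mem (hU.mem_nhds hc) heq).deriv_eq]
    have hgc : HasDerivAt g (deriv g c) c := (hg c hc).differentiableAt.hasDerivAt
    have hgc' : HasDerivAt (deriv g) (deriv (deriv g) c) c :=
      (hg' c hc).differentiableAt.hasDerivAt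
    have hgc'' : HasDerivAt (deriv (deriv g)) (deriv (deriv (deriv g)) c) c :=
      (hg'' c hc).differentiableAt.hasDerivAt
    have hw : HasDerivAt (fun w : ℂ => w - c) 1 c := (hasDerivAt_id c).sub_const c
    have hS : HasDerivAt (fun z => 2 * a2 + 6 * (z - c) * g z + 6 * (z - c) ^ 2 * deriv g z
          + (z - c) ^ 3 * deriv (deriv g) z)
        ((6 * 1 * g c + 6 * (c - c) * deriv g c
          + (6 * ((2 : ℕ) * (c - c) ^ (2 - 1) * 1) * deriv g c
            + 6 * (c - c) ^ 2 * deriv (deriv g) c))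
          + (((3 : ℕ) * (c - c) ^ (3 - 1) * 1) * deriv (deriv g) c
            + (c - c) ^ 3 * deriv (deriv (deriv g)) c)) c :=
      ((((hw.const_mul 6).mul hgc).const_add (2 * a2)).add
        (((hw.pow 2).const_mul 6).mul hgc')).add ((hw.pow 3).mul hgc'')
    rw [hS.deriv]
    push_cast
    ring


private noncomputable def NN (T : ℂ → ℂ) (x y z : ℂ) : ℂ :=
  dslope T x y * dslope (dslope (dslope T z) z) x y
    + dslope T y z * dslope (dslope (dslope T x) x) y z
    - dslope (dslope T x) y z ^ 2

set_option maxHeartbeats 1000000 in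
/-- the function
`N(x,y,z) = [T'(x)(T(z)−T(y)) − T'(z)(T(x)−T(y))]·(x−y)(z−y) + (x−z)(T(x)−T(y))(T(z)−T(y))`
factors as `(x−y)²(z−y)²(x−z)·N₁(x,y,z)` with `N₁` holomorphic in each variable on a disk
around `x₀`; moreover if `T''(x₀) = 0` then `N₁(x₀,x₀,x₀) = T'(x₀)·T'''(x₀)/3`. -/
theorem stmt10
    (Ω : Set ℂ) (hΩo : IsOpen Ω) (hΩb : Bornology.IsBounded Ω)
    (hΩc : IsConnected Ω) (hΩsc : SimplyConnectedSpace Ω)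
    (x₀ : ℂ) (hx₀ : x₀ ∈ Ω)
    (T : ℂ → ℂ) (hTd : DifferentiableOn ℂ T Ω)
    (hTbij : Set.BijOn T Ω (Metric.ball 0 1))
    (hT0 : T x₀ = 0) :
    ∃ r > (0:ℝ), Metric.ball x₀ r ⊆ Ω ∧
      ∃ N₁ : ℂ → ℂ → ℂ → ℂ,
        (∀ y ∈ Metric.ball x₀ r, ∀ z ∈ Metric.ball x₀ r,
          DifferentiableOn ℂ (fun x => N₁ x y z) (Metric.ball x₀ r)) ∧
        (∀ x ∈ Metric.ball x₀ r, ∀ z ∈ Metric.ball x₀ r,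
          DifferentiableOn ℂ (fun y => N₁ x y z) (Metric.ball x₀ r)) ∧
        (∀ x ∈ Metric.ball x₀ r, ∀ y ∈ Metric.ball x₀ r,
          DifferentiableOn ℂ (fun z => N₁ x y z) (Metric.ball x₀ r)) ∧
        (∀ x ∈ Metric.ball x₀ r, ∀ y ∈ Metric.ball x₀ r, ∀ z ∈ Metric.ball x₀ r,
          (deriv T x * (T z - T y) - deriv T z * (T x - T y)) * (x - y) * (z - y)
              + (x - z) * (T x - T y) * (T z - T y)
            = (x - y) ^ 2 * (z - y) ^ 2 * (x - z) * N₁ x y z) ∧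
        (iteratedDeriv 2 T x₀ = 0 →
          N₁ x₀ x₀ x₀ = deriv T x₀ * iteratedDeriv 3 T x₀ / 3) := by
  obtain ⟨r, hr, hrΩ⟩ := Metric.isOpen_iff.1 hΩo x₀ hx₀
  have hBo : IsOpen (Metric.ball x₀ r) := Metric.isOpen_ball
  have hx₀B : x₀ ∈ Metric.ball x₀ r := Metric.mem_ball_self hr
  have hT : AnalyticOnNhd ℂ T (Metric.ball x₀ r) := (hTd.mono hrΩ).analyticOnNhd hBo
  have hd : ∀ a ∈ Metric.ball x₀ r, DifferentiableAt ℂ T a :=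
    fun a ha => (hT a ha).differentiableAt
  have hds : ∀ a ∈ Metric.ball x₀ r, AnalyticOnNhd ℂ (dslope T a) (Metric.ball x₀ r) :=
    fun a ha => analyticOnNhd_dslope hT ha
  have hds2 : ∀ a ∈ Metric.ball x₀ r, ∀ b ∈ Metric.ball x₀ r,
      AnalyticOnNhd ℂ (dslope (dslope T a) b) (Metric.ball x₀ r) :=
    fun a ha b hb => analyticOnNhd_dslope (hds a ha) hb
  have hS : ∀ a ∈ Metric.ball x₀ r, ∀ b ∈ Metric.ball x₀ r, ∀ c ∈ Metric.ball x₀ r,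
      dslope (dslope (dslope T a) a) b c = deriv (dslope (dslope T b) c) a := by
    intro a ha b hb c hc
    rw [ds_ds_comm c ((hds a ha) a ha).differentiableAt ((hds a ha) b hb).differentiableAt]
    have h2 : dslope (dslope T a) b = dslope (dslope T b) a :=
      funext fun u => ds_ds_comm u (hd a ha) (hd b hb)
    rw [h2, ds_comm (dslope (dslope T b) a) a c,
      ds_ds_comm a ((hds b hb) a ha).differentiableAt ((hds b hb) c hc).differentiableAt,
      dslope_same]
  have hS2 : ∀ a ∈ Metric.ball x₀ r, ∀ b ∈ Metric.ball x₀ r, ∀ c : ℂ,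
      dslope (dslope T a) b c = dslope (dslope T b) c a := by
    intro a ha b hb c
    rw [ds_ds_comm c (hd a ha) (hd b hb), ds_comm (dslope T b) a c]
  refine ⟨r, hr, hrΩ, NN T, ?_, ?_, ?_, ?_, ?_⟩
  · -- differentiable in x
    intro y hy z hz
    have hnice : DifferentiableOn ℂ (fun x =>
        dslope T y x * dslope (dslope (dslope T z) z) y x
          + dslope T y z * deriv (dslope (dslope T y) z) x
          - dslope (dslope T y) z x ^ 2) (Metric.ball x₀ r) := by
      refine AnalyticOnNhd.differentiableOn (fun x hx => ?_)
      exact ((((hds y hy) x hx).mul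
          ((analyticOnNhd_dslope (hds2 z hz z hz) hy) x hx)).add
        (analyticAt_const.mul (((hds2 y hy z hz).deriv) x hx))).sub
        (((hds2 y hy z hz) x hx).pow 2)
    refine hnice.congr (fun x hx => ?_)
    show NN T x y z = _
    rw [NN, ds_comm T x y, ds_comm (dslope (dslope T z) z) x y,
      hS x hx y hy z hz, hS2 x hx y hy z]
  · -- differentiable in y
    intro x hx z hz
    have hnice : DifferentiableOn ℂ (fun y =>
        dslope T x y * dslope (dslope (dslope T z) z) x y
          + dslope T z y * dslope (dslope (dslope T x) x) z y
          - dslope (dslope T x) z y ^ 2) (Metric.ball x₀ r) := by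
      refine AnalyticOnNhd.differentiableOn (fun y hy => ?_)
      exact ((((hds x hx) y hy).mul
          ((analyticOnNhd_dslope (hds2 z hz z hz) hx) y hy)).add
        (((hds z hz) y hy).mul
          ((analyticOnNhd_dslope (hds2 x hx x hx) hz) y hy))).sub
        (((hds2 x hx z hz) y hy).pow 2)
    refine hnice.congr (fun y hy => ?_)
    show NN T x y z = _
    rw [NN, ds_comm T y z, ds_comm (dslope (dslope T x) x) y z, ds_comm (dslope T x) y z]
  · -- differentiable in z
    intro x hx y hy
    have hnice : DifferentiableOn ℂ (fun z =>
        dslope T x y * deriv (dslope (dslope T x) y) z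
          + dslope T y z * dslope (dslope (dslope T x) x) y z
          - dslope (dslope T x) y z ^ 2) (Metric.ball x₀ r) := by
      refine AnalyticOnNhd.differentiableOn (fun z hz => ?_)
      exact ((analyticAt_const.mul (((hds2 x hx y hy).deriv) z hz)).add
        (((hds y hy) z hz).mul
          ((analyticOnNhd_dslope (hds2 x hx x hx) hy) z hz))).sub
        (((hds2 x hx y hy) z hz).pow 2)
    refine hnice.congr (fun z hz => ?_)
    show NN T x y z = _
    rw [NN, hS z hz x hx y hy]
  · -- factorization identity
    intro x hx y hy z hz
    rcases eq_or_ne x y with rfl | hxy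
    · ring
    rcases eq_or_ne y z with rfl | hyz
    · ring
    rcases eq_or_ne x z with rfl | hxz
    · ring
    have hyx := hxy.symm
    have hzy := hyz.symm
    have hzx := hxz.symm
    have n1 : (y : ℂ) - x ≠ 0 := sub_ne_zero.2 hyx
    have n2 : (z : ℂ) - y ≠ 0 := sub_ne_zero.2 hzy
    have n5 : (z : ℂ) - x ≠ 0 := sub_ne_zero.2 hzx
    have hD : (((y : ℂ) - x) * (z - y) * (z - x)) ^ 2 ≠ 0 :=
      pow_ne_zero 2 (mul_ne_zero (mul_ne_zero n1 n2) n5)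
    have hq1 : dslope T x y * dslope (dslope (dslope T z) z) x y
        = (T y - T x) * ((deriv T z * (z - y) - (T z - T y)) * ((z - x) * (z - x))
            - ((z - y) * (z - y)) * (deriv T z * (z - x) - (T z - T x)))
          / ((y - x) * (z - y) * (z - x)) ^ 2 := by
      rw [ds_eq T hyx, ds_eq (dslope (dslope T z) z) hyx,
        ds_eq' (dslope T z) hyz, ds_eq' (dslope T z) hxz, dslope_same,
        ds_eq' T hyz, ds_eq' T hxz,
        sub_div' (a := T z - T y) (b := deriv T z) (c := z - y) n2,
        sub_div' (a := T z - T x) (b := deriv T z) (c := z - x) n5,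
        div_div, div_div,
        div_sub_div _ _ (mul_ne_zero n2 n2) (mul_ne_zero n5 n5),
        div_div, div_mul_div_comm,
        div_eq_div_iff
          (mul_ne_zero n1 (mul_ne_zero (mul_ne_zero (mul_ne_zero n2 n2) (mul_ne_zero n5 n5)) n1))
          hD]
      ring
    have hq2 : dslope T y z * dslope (dslope (dslope T x) x) y z
        = (T z - T y) * (((T z - T x) - deriv T x * (z - x)) * ((y - x) * (y - x))
            - ((z - x) * (z - x)) * ((T y - T x) - deriv T x * (y - x)))
          / ((y - x) * (z - y) * (z - x)) ^ 2 := by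
      rw [ds_eq T hzy, ds_eq (dslope (dslope T x) x) hzy,
        ds_eq (dslope T x) hzx, ds_eq (dslope T x) hyx, dslope_same,
        ds_eq T hzx, ds_eq T hyx,
        div_sub' (a := T z - T x) (b := deriv T x) (c := z - x) n5,
        div_sub' (a := T y - T x) (b := deriv T x) (c := y - x) n1,
        div_div, div_div,
        div_sub_div _ _ (mul_ne_zero n5 n5) (mul_ne_zero n1 n1),
        div_div, div_mul_div_comm,
        div_eq_div_iff
          (mul_ne_zero n2 (mul_ne_zero (mul_ne_zero (mul_ne_zero n5 n5) (mul_ne_zero n1 n1)) n2))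
          hD]
      ring
    have hq3 : dslope (dslope T x) y z ^ 2
        = ((T z - T x) * (y - x) - (z - x) * (T y - T x)) ^ 2
          / ((y - x) * (z - y) * (z - x)) ^ 2 := by
      rw [ds_eq (dslope T x) hzy, ds_eq T hzx, ds_eq T hyx,
        div_sub_div _ _ n5 n1, div_div, div_pow,
        div_eq_div_iff (pow_ne_zero 2 (mul_ne_zero (mul_ne_zero n5 n1) n2)) hD]
      ring
    rw [NN, hq1, hq2, hq3, ← add_div, div_sub_div_same, ← mul_div_assoc, eq_div_iff hD]
    ring
  · -- value at the center
    intro h2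
    have hg3 : AnalyticOnNhd ℂ (dslope (dslope (dslope T x₀) x₀) x₀) (Metric.ball x₀ r) :=
      analyticOnNhd_dslope (hds2 x₀ hx₀B x₀ hx₀B) hx₀B
    have e1 : ∀ (f : ℂ → ℂ) (c w : ℂ), f w = f c + (w - c) * dslope f c w := by
      intro f c w
      have h := sub_smul_dslope f c w
      rw [smul_eq_mul] at h
      linear_combination -h
    have hT_eq : ∀ w, T w = T x₀ + (w - x₀) * (dslope T x₀ x₀
        + (w - x₀) * (dslope (dslope T x₀) x₀ x₀
          + (w - x₀) * dslope (dslope (dslope T x₀) x₀) x₀ w)) := by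
      intro w
      have h1 := e1 T x₀ w
      have h2' := e1 (dslope T x₀) x₀ w
      have h3 := e1 (dslope (dslope T x₀) x₀) x₀ w
      linear_combination h1 + (w - x₀) * h2' + (w - x₀) ^ 2 * h3
    obtain ⟨i2, i3⟩ := iter_deriv_23 hBo hx₀B hg3 hT_eq
    rw [NN, dslope_same, dslope_same, dslope_same]
    have hz2 : deriv (dslope T x₀) x₀ = 0 := by
      rw [i2, dslope_same] at h2
      have := mul_eq_zero.1 h2
      rcases this with h | h
      · exact absurd h (by norm_num)
      · exact h
    rw [i3, dslope_same, hz2]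
    ring
end
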